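/- Let E be a real normed vector space, let v ∈ E be a unit vector, let ε > 0, and let γ₁, γ₂ : [0, ε) → E be continuous curves with γᵢ(0) = 0, ‖γᵢ(t)‖ = t for all t, γᵢ(t)/t → v as t → 0⁺ for both i = 1, 2 (the same tangent direction), and suppose the images of γ₁ and γ₂ intersect only at 0. Let X be the union of the images of γ₁ and γ₂. Then the germ of X at 0 is not Lipschitz normally embedded: for every C > 0 and every δ > 0 there exists t ∈ (0, δ) such that every continuous path in X joining γ₁(t) to γ₂(t) has length (total variation) strictly greater than C·‖γ₁(t) − γ₂(t)‖. -/

import Mathlib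

open Filter Set

/-- If a curve on `[0, ε)` is parametrized by distance to the origin, a limit of points of its
image which has norm `< ε` is in the image. -/
lemma image_limit_mem
    {E : Type*} [NormedAddCommGroup E] (ε : ℝ) (γ : ℝ → E)
    (hc : ContinuousOn γ (Set.Ico 0 ε))
    (hn : ∀ t ∈ Set.Ico (0 : ℝ) ε, ‖γ t‖ = t)
    (x : ℕ → E) (hx : ∀ n, x n ∈ γ '' Set.Ico 0 ε) (y : E)
    (hy : Tendsto x atTop (nhds y)) (hyε : ‖y‖ < ε) :
    y ∈ γ '' Set.Ico 0 ε := by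
  choose t htmem htx using hx
  have hnt : ∀ n, ‖x n‖ = t n := fun n => by rw [← htx n]; exact hn _ (htmem n)
  have htt : Tendsto t atTop (nhds ‖y‖) := by
    have : Tendsto (fun n => ‖x n‖) atTop (nhds ‖y‖) := hy.norm
    simpa [hnt] using this
  have hy0 : 0 ≤ ‖y‖ := norm_nonneg y
  have hymem : ‖y‖ ∈ Set.Ico (0 : ℝ) ε := ⟨hy0, hyε⟩
  have : Tendsto (fun n => γ (t n)) atTop (nhds (γ ‖y‖)) := by
    have hcw : ContinuousWithinAt γ (Set.Ico 0 ε) ‖y‖ := hc _ hymem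
    exact hcw.tendsto.comp (tendsto_nhdsWithin_of_tendsto_nhds_of_eventually_within _ htt
      (Eventually.of_forall htmem))
  have : Tendsto x atTop (nhds (γ ‖y‖)) := by
    simpa [htx] using this
  have heq : y = γ ‖y‖ := tendsto_nhds_unique hy this
  exact ⟨‖y‖, hymem, heq.symm⟩

/-- `Icc 0 1 ∩ σ ⁻¹' (γ '' Ico 0 ε)` is closed when `σ` is continuous on `Icc 0 1` with image
contained in a set of points of norm `< ε`. -/
lemma preimage_closed
    {E : Type*} [NormedAddCommGroup E] (ε : ℝ) (γ : ℝ → E)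
    (hc : ContinuousOn γ (Set.Ico 0 ε))
    (hn : ∀ t ∈ Set.Ico (0 : ℝ) ε, ‖γ t‖ = t)
    (σ : ℝ → E) (hσ : ContinuousOn σ (Set.Icc 0 1))
    (him : ∀ s ∈ Set.Icc (0:ℝ) 1, ‖σ s‖ < ε) :
    IsClosed (Set.Icc (0:ℝ) 1 ∩ σ ⁻¹' (γ '' Set.Ico 0 ε)) := by
  apply IsSeqClosed.isClosed
  intro u p hu hup
  have hpIcc : p ∈ Set.Icc (0:ℝ) 1 :=
    isClosed_Icc.isSeqClosed (fun n => (hu n).1) hup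
  have hσu : Tendsto (fun n => σ (u n)) atTop (nhds (σ p)) :=
    (hσ p hpIcc).tendsto.comp (tendsto_nhdsWithin_of_tendsto_nhds_of_eventually_within _ hup
      (Eventually.of_forall fun n => (hu n).1))
  refine ⟨hpIcc, ?_⟩
  exact image_limit_mem ε γ hc hn (fun n => σ (u n)) (fun n => (hu n).2) _ hσu (him p hpIcc)

/-- Two curve branches parametrized by the distance, sharing the same unit tangent direction
`v` at `0` and meeting only at `0`, form a germ which is not Lipschitz normally embedded:
for every `C > 0` and `δ > 0` there is `t ∈ (0, δ)` such that every continuous path in the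
union joining `γ₁(t)` to `γ₂(t)` has length strictly greater than `C ‖γ₁(t) - γ₂(t)‖`. -/
theorem not_lne_of_common_tangent
    {E : Type*} [NormedAddCommGroup E] [NormedSpace ℝ E]
    (v : E) (hv : ‖v‖ = 1) (ε : ℝ) (hε : 0 < ε) (γ₁ γ₂ : ℝ → E)
    (hc₁ : ContinuousOn γ₁ (Set.Ico 0 ε)) (hc₂ : ContinuousOn γ₂ (Set.Ico 0 ε))
    (h₁0 : γ₁ 0 = 0) (h₂0 : γ₂ 0 = 0)
    (hn₁ : ∀ t ∈ Set.Ico (0 : ℝ) ε, ‖γ₁ t‖ = t)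
    (hn₂ : ∀ t ∈ Set.Ico (0 : ℝ) ε, ‖γ₂ t‖ = t)
    (ht₁ : Tendsto (fun t => t⁻¹ • γ₁ t) (nhdsWithin 0 (Set.Ioi 0)) (nhds v))
    (ht₂ : Tendsto (fun t => t⁻¹ • γ₂ t) (nhdsWithin 0 (Set.Ioi 0)) (nhds v))
    (hint : γ₁ '' Set.Ico 0 ε ∩ γ₂ '' Set.Ico 0 ε = {0}) :
    ∀ C : ℝ, 0 < C → ∀ δ : ℝ, 0 < δ → ∃ t : ℝ, 0 < t ∧ t < δ ∧ t < ε ∧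
      ∀ σ : ℝ → E, ContinuousOn σ (Set.Icc 0 1) →
        σ '' Set.Icc 0 1 ⊆ γ₁ '' Set.Ico 0 ε ∪ γ₂ '' Set.Ico 0 ε →
        σ 0 = γ₁ t → σ 1 = γ₂ t →
        ENNReal.ofReal (C * ‖γ₁ t - γ₂ t‖) < eVariationOn σ (Set.Icc 0 1) := by
  intro C hC δ hδ
  -- find a suitable `t`
  have hdiff : Tendsto (fun t : ℝ => t⁻¹ • γ₁ t - t⁻¹ • γ₂ t) (nhdsWithin 0 (Set.Ioi 0))
      (nhds 0) := by simpa using ht₁.sub ht₂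
  have hev : ∀ᶠ t in nhdsWithin (0:ℝ) (Set.Ioi 0), ‖t⁻¹ • γ₁ t - t⁻¹ • γ₂ t‖ < 2 / C := by
    have h2C : (0:ℝ) < 2 / C := by positivity
    have := hdiff.norm
    simp only [norm_zero] at this
    exact this.eventually_lt_const h2C
  have hmem : Set.Ioo (0:ℝ) (min δ ε) ∈ nhdsWithin (0:ℝ) (Set.Ioi 0) :=
    Ioo_mem_nhdsGT_of_mem ⟨le_refl 0, lt_min hδ hε⟩
  obtain ⟨t, hlt, ht0, htδε⟩ := (hev.and hmem).exists
  refine ⟨t, ht0, lt_of_lt_of_le htδε (min_le_left _ _),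
    lt_of_lt_of_le htδε (min_le_right _ _), ?_⟩
  intro σ hσc hσim hσ0 hσ1
  have htIco : t ∈ Set.Ico 0 ε := ⟨ht0.le, lt_of_lt_of_le htδε (min_le_right _ _)⟩
  have hγ₁t : γ₁ t ∈ γ₁ '' Set.Ico 0 ε := ⟨t, htIco, rfl⟩
  have hγ₂t : γ₂ t ∈ γ₂ '' Set.Ico 0 ε := ⟨t, htIco, rfl⟩
  have himnorm : ∀ s ∈ Set.Icc (0:ℝ) 1, ‖σ s‖ < ε := by
    intro s hs
    rcases hσim ⟨s, hs, rfl⟩ with ⟨u, hu, heq⟩ | ⟨u, hu, heq⟩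
    · rw [← heq, hn₁ _ hu]; exact hu.2
    · rw [← heq, hn₂ _ hu]; exact hu.2
  -- the path must pass through the origin
  have hzero : ∃ s ∈ Set.Icc (0:ℝ) 1, σ s = 0 := by
    by_contra h
    push_neg at h
    have hS := preimage_closed ε γ₁ hc₁ hn₁ σ hσc himnorm
    have hT := preimage_closed ε γ₂ hc₂ hn₂ σ hσc himnorm
    have hcover : Set.Icc (0:ℝ) 1 ⊆
        (Set.Icc (0:ℝ) 1 ∩ σ ⁻¹' (γ₁ '' Set.Ico 0 ε)) ∪
        (Set.Icc (0:ℝ) 1 ∩ σ ⁻¹' (γ₂ '' Set.Ico 0 ε)) := by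
      intro s hs
      rcases hσim ⟨s, hs, rfl⟩ with hmem | hmem
      · exact Or.inl ⟨hs, hmem⟩
      · exact Or.inr ⟨hs, hmem⟩
    have hdisj : Set.Icc (0:ℝ) 1 ∩
        ((Set.Icc (0:ℝ) 1 ∩ σ ⁻¹' (γ₁ '' Set.Ico 0 ε)) ∩
         (Set.Icc (0:ℝ) 1 ∩ σ ⁻¹' (γ₂ '' Set.Ico 0 ε))) = ∅ := by
      ext s
      simp only [Set.mem_inter_iff, Set.mem_preimage, Set.mem_empty_iff_false, iff_false]
      rintro ⟨hs, ⟨-, h1⟩, ⟨-, h2⟩⟩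
      have : σ s ∈ γ₁ '' Set.Ico 0 ε ∩ γ₂ '' Set.Ico 0 ε := ⟨h1, h2⟩
      rw [hint] at this
      exact h s hs this
    rcases isPreconnected_iff_subset_of_disjoint_closed.mp isPreconnected_Icc _ _ hS hT
        hcover hdisj with h1 | h1
    · have h2 : σ 1 ∈ γ₁ '' Set.Ico 0 ε := (h1 (by norm_num : (1:ℝ) ∈ Set.Icc (0:ℝ) 1)).2
      have : σ 1 ∈ γ₁ '' Set.Ico 0 ε ∩ γ₂ '' Set.Ico 0 ε := ⟨h2, hσ1 ▸ hγ₂t⟩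
      rw [hint] at this
      have : γ₂ t = 0 := hσ1 ▸ this
      have := hn₂ t htIco
      rw [this] at this; simp_all
    · have h2 : σ 0 ∈ γ₂ '' Set.Ico 0 ε := (h1 (by norm_num : (0:ℝ) ∈ Set.Icc (0:ℝ) 1)).2
      have : σ 0 ∈ γ₁ '' Set.Ico 0 ε ∩ γ₂ '' Set.Ico 0 ε := ⟨hσ0 ▸ hγ₁t, h2⟩
      rw [hint] at this
      have h3 : γ₁ t = 0 := hσ0 ▸ this
      have h4 := hn₁ t htIco
      rw [h3] at h4; simp_all
  obtain ⟨s, hsIcc, hs0⟩ := hzero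
  -- lower bound on the variation
  have hvar : ENNReal.ofReal (2 * t) ≤ eVariationOn σ (Set.Icc 0 1) := by
    set u : ℕ → ℝ := fun n => if n = 0 then 0 else if n = 1 then s else 1 with hu_def
    have hu : Monotone u := by
      apply monotone_nat_of_le_succ
      intro n
      match n with
      | 0 => simpa [hu_def] using hsIcc.1
      | 1 => simpa [hu_def] using hsIcc.2
      | (m+2) => simp [hu_def]
    have hus : ∀ i, u i ∈ Set.Icc (0:ℝ) 1 := by
      intro i
      match i with
      | 0 => simp [hu_def]
      | 1 => simpa [hu_def] using hsIcc
      | (m+2) => simp [hu_def]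
    have hsum := eVariationOn.sum_le (f := σ) (n := 2) hu hus
    have : (∑ i ∈ Finset.range 2, edist (σ (u (i + 1))) (σ (u i)))
        = ENNReal.ofReal t + ENNReal.ofReal t := by
      rw [Finset.sum_range_succ, Finset.sum_range_one]
      simp only [hu_def]
      norm_num
      rw [hs0, hσ0, hσ1, edist_eq_enorm_sub, edist_eq_enorm_sub]
      simp only [zero_sub, sub_zero, enorm_neg]
      rw [← ofReal_norm, ← ofReal_norm, hn₁ t htIco, hn₂ t htIco]
    rw [this] at hsum
    calc ENNReal.ofReal (2 * t) = ENNReal.ofReal t + ENNReal.ofReal t := by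
          rw [← ENNReal.ofReal_add ht0.le ht0.le]; ring_nf
      _ ≤ _ := hsum
  refine lt_of_lt_of_le ?_ hvar
  rw [ENNReal.ofReal_lt_ofReal_iff (by positivity)]
  -- C * ‖γ₁ t - γ₂ t‖ < 2 * t
  have key : ‖γ₁ t - γ₂ t‖ = t * ‖t⁻¹ • γ₁ t - t⁻¹ • γ₂ t‖ := by
    rw [← smul_sub, norm_smul, norm_inv, Real.norm_eq_abs, abs_of_pos ht0]
    field_simp
  rw [key]
  calc C * (t * ‖t⁻¹ • γ₁ t - t⁻¹ • γ₂ t‖) = t * (C * ‖t⁻¹ • γ₁ t - t⁻¹ • γ₂ t‖) := by ring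
    _ < t * (C * (2 / C)) := by
        apply mul_lt_mul_of_pos_left _ ht0
        exact mul_lt_mul_of_pos_left hlt hC
    _ = 2 * t := by field_simp
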